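/- Let μ > 0, γ > 0 with γ ≥ √μ/2, and let x ∈ ℝ. Set p = γ² + 2μ − x²/3, q = x·γ² + 2x³/27 − (x/3)(γ² + 2μ), D = p³/27 + q²/4, s = (q/2 + √D)^{1/3}, t = (q/2 − √D)^{1/3} (real cube roots), and z = x/3 + s + t. Then z is the unique global minimizer over ℝ of the proximal cost function g(u) = (x − u)²/(2μ) − log(γ/(γ² + u²)); that is, prox_Cauchy^μ(x) = z. -/

import Mathlib

/-- The real cube root function: preserves sign, defined for all reals. -/
noncomputable def cbrt (a : ℝ) : ℝ := Real.sign a * |a| ^ ((1 : ℝ) / 3)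


lemma cbrt_cube (a : ℝ) : cbrt a ^ 3 = a := by
  unfold cbrt
  rw [mul_pow, ← Real.rpow_natCast (|a| ^ ((1:ℝ)/3)) 3, ← Real.rpow_mul (abs_nonneg a)]
  norm_num
  rcases lt_trichotomy a 0 with h | h | h
  · rw [Real.sign_of_neg h, abs_of_neg h]; ring
  · simp [h]
  · rw [Real.sign_of_pos h, abs_of_pos h]; ring

lemma cube_inj {a b : ℝ} (h : a ^ 3 = b ^ 3) : a = b :=
  (Odd.strictMono_pow (R := ℝ) (by decide : Odd 3)).injective h

lemma aux_deriv (μ γ x : ℝ) (hμ : 0 < μ) (hγ : 0 < γ) (v : ℝ) :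
    HasDerivAt (fun u : ℝ => (x - u) ^ 2 / (2 * μ) - Real.log (γ / (γ ^ 2 + u ^ 2)))
      ((v - x) / μ + 2 * v / (γ ^ 2 + v ^ 2)) v := by
  have hA : ∀ u : ℝ, 0 < γ ^ 2 + u ^ 2 := fun u => by positivity
  have hfun : (fun u : ℝ => (x - u) ^ 2 / (2 * μ) - Real.log (γ / (γ ^ 2 + u ^ 2)))
      = fun u : ℝ => ((x - u) ^ 2 / (2 * μ) + Real.log (γ ^ 2 + u ^ 2)) - Real.log γ := by
    funext u
    rw [Real.log_div (ne_of_gt hγ) (ne_of_gt (hA u))]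
    ring
  rw [hfun]
  have h1 : HasDerivAt (fun u : ℝ => (x - u) ^ 2 / (2 * μ)) ((v - x) / μ) v := by
    have := (((hasDerivAt_id v).const_sub x).pow 2).div_const (2 * μ)
    refine this.congr_deriv ?_
    field_simp
    simp only [id]
    ring
  have hin : HasDerivAt (fun u : ℝ => γ ^ 2 + u ^ 2) (2 * v) v := by
    simpa using (hasDerivAt_pow 2 v).const_add (γ ^ 2)
  have h2 : HasDerivAt (fun u : ℝ => Real.log (γ ^ 2 + u ^ 2)) (2 * v / (γ ^ 2 + v ^ 2)) v := by
    have := (Real.hasDerivAt_log (ne_of_gt (hA v))).comp v hin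
    refine this.congr_deriv ?_
    field_simp
  exact (h1.add h2).sub_const _

set_option maxHeartbeats 1000000 in
/-- For μ > 0, γ > 0 with γ ≥ √μ/2 and x ∈ ℝ, the Cardano point
z = x/3 + s + t (with p, q, D, s, t as in Cardano's method) is the unique
global minimizer over ℝ of the proximal cost
g(u) = (x − u)²/(2μ) − log(γ/(γ² + u²)); i.e. prox_Cauchy^μ(x) = z. -/
theorem cauchy_prox_equals_cardano (μ γ x : ℝ) (hμ : 0 < μ) (hγ : 0 < γ)
    (hcond : Real.sqrt μ / 2 ≤ γ) (p q D s t z : ℝ)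
    (hp : p = γ ^ 2 + 2 * μ - x ^ 2 / 3)
    (hq : q = x * γ ^ 2 + 2 * x ^ 3 / 27 - (x / 3) * (γ ^ 2 + 2 * μ))
    (hD : D = p ^ 3 / 27 + q ^ 2 / 4)
    (hs : s = cbrt (q / 2 + Real.sqrt D))
    (ht : t = cbrt (q / 2 - Real.sqrt D))
    (hz : z = x / 3 + s + t) :
    (∀ u : ℝ,
      (x - z) ^ 2 / (2 * μ) - Real.log (γ / (γ ^ 2 + z ^ 2)) ≤
        (x - u) ^ 2 / (2 * μ) - Real.log (γ / (γ ^ 2 + u ^ 2))) ∧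
    (∀ w : ℝ,
      (∀ u : ℝ,
        (x - w) ^ 2 / (2 * μ) - Real.log (γ / (γ ^ 2 + w ^ 2)) ≤
          (x - u) ^ 2 / (2 * μ) - Real.log (γ / (γ ^ 2 + u ^ 2))) → w = z) := by
  have hA : ∀ u : ℝ, 0 < γ ^ 2 + u ^ 2 := fun u => by positivity
  have hγ2 : μ ≤ 4 * γ ^ 2 := by
    nlinarith [Real.sq_sqrt hμ.le, Real.sqrt_nonneg μ]
  -- D is nonnegative
  have hDnn : 0 ≤ D := by
    rw [hD, hp, hq]
    have hc : (0:ℝ) ≤ 3 * γ ^ 2 - 3 * μ / 4 := by linarith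
    have h1 : (0:ℝ) < 27 * μ + 36 * (3 * γ ^ 2 - 3 * μ / 4) := by linarith
    have h2 := sq_nonneg ((27 * μ / 2 + 18 * (3 * γ ^ 2 - 3 * μ / 4)) * (x ^ 2 - 27 * μ / 4)
      + (81 / 2) * μ * (3 * γ ^ 2 - 3 * μ / 4) + 6 * (3 * γ ^ 2 - 3 * μ / 4) ^ 2)
    have h3 : (0:ℝ) ≤ μ * (3 * γ ^ 2 - 3 * μ / 4) ^ 3 := mul_nonneg hμ.le (by positivity)
    nlinarith [h1, h2, h3]
  have hDs : Real.sqrt D ^ 2 = D := Real.sq_sqrt hDnn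
  have hs3 : s ^ 3 = q / 2 + Real.sqrt D := by rw [hs]; exact cbrt_cube _
  have ht3 : t ^ 3 = q / 2 - Real.sqrt D := by rw [ht]; exact cbrt_cube _
  have hst : s * t = -(p / 3) := by
    apply cube_inj
    rw [mul_pow, hs3, ht3]
    linear_combination -hDs - hD
  have hy3 : (s + t) ^ 3 = q - p * (s + t) := by
    linear_combination hs3 + ht3 + 3 * (s + t) * hst
  have hroot : z ^ 3 - x * z ^ 2 + (γ ^ 2 + 2 * μ) * z - x * γ ^ 2 = 0 := by
    rw [hz]
    linear_combination hy3 - (s + t) * hp + hq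
  -- key algebraic facts
  have hxz : (x - z) * (γ ^ 2 + z ^ 2) = 2 * μ * z := by linear_combination -hroot
  have hx2 : (x - z) ^ 2 * (γ ^ 2 + z ^ 2) ^ 2 = 4 * μ ^ 2 * z ^ 2 := by
    linear_combination ((x - z) * (γ ^ 2 + z ^ 2) + 2 * μ * z) * hxz
  have hxzA : (z ^ 2 - x * z) * (γ ^ 2 + z ^ 2) = -(2 * μ * z ^ 2) := by
    linear_combination (-z) * hxz
  have key : 0 ≤ 4 * (γ ^ 2 + 2 * μ) * (γ ^ 2 + z ^ 2) ^ 2 - 8 * μ * z ^ 2 * (γ ^ 2 + z ^ 2)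
      - 4 * μ ^ 2 * z ^ 2 := by
    nlinarith [mul_nonneg (sq_nonneg γ) (sq_nonneg (γ ^ 2 + z ^ 2 - μ)),
      mul_nonneg (mul_nonneg (by linarith : (0:ℝ) ≤ 4 * γ ^ 2 - μ) hμ.le)
        (by positivity : (0:ℝ) ≤ γ ^ 2 + z ^ 2)]
  have hdisc : (z - x) ^ 2 ≤ 4 * (z ^ 2 - x * z + γ ^ 2 + 2 * μ) := by
    have hA2 : (0:ℝ) < (γ ^ 2 + z ^ 2) ^ 2 := by positivity
    have hT : 0 ≤ (4 * (z ^ 2 - x * z + γ ^ 2 + 2 * μ) - (z - x) ^ 2) * (γ ^ 2 + z ^ 2) ^ 2 := by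
      calc (0:ℝ) ≤ 4 * (γ ^ 2 + 2 * μ) * (γ ^ 2 + z ^ 2) ^ 2 - 8 * μ * z ^ 2 * (γ ^ 2 + z ^ 2)
          - 4 * μ ^ 2 * z ^ 2 := key
        _ = (4 * (z ^ 2 - x * z + γ ^ 2 + 2 * μ) - (z - x) ^ 2) * (γ ^ 2 + z ^ 2) ^ 2 := by
          linear_combination (-(4 * (γ ^ 2 + z ^ 2))) * hxzA + hx2
    have := (mul_nonneg_iff_of_pos_right hA2).mp hT
    linarith
  have hQ : ∀ v : ℝ, 0 ≤ v ^ 2 + (z - x) * v + (z ^ 2 - x * z + γ ^ 2 + 2 * μ) := by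
    intro v
    nlinarith [sq_nonneg (2 * v + (z - x)), hdisc]
  -- the derivative in factored form
  have hderiv : ∀ v : ℝ,
      HasDerivAt (fun u : ℝ => (x - u) ^ 2 / (2 * μ) - Real.log (γ / (γ ^ 2 + u ^ 2)))
        ((v - z) * (v ^ 2 + (z - x) * v + (z ^ 2 - x * z + γ ^ 2 + 2 * μ))
          / (μ * (γ ^ 2 + v ^ 2))) v := by
    intro v
    have heq : (v - x) / μ + 2 * v / (γ ^ 2 + v ^ 2)
        = (v - z) * (v ^ 2 + (z - x) * v + (z ^ 2 - x * z + γ ^ 2 + 2 * μ))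
          / (μ * (γ ^ 2 + v ^ 2)) := by
      rw [div_add_div _ _ (ne_of_gt hμ) (ne_of_gt (hA v)), div_eq_div_iff
        (by positivity) (by positivity)]
      linear_combination (μ * (γ ^ 2 + v ^ 2)) * hroot
    exact heq ▸ aux_deriv μ γ x hμ hγ v
  set g : ℝ → ℝ := fun u : ℝ => (x - u) ^ 2 / (2 * μ) - Real.log (γ / (γ ^ 2 + u ^ 2)) with hgdef
  have hdiff : Differentiable ℝ g := fun v => ((hderiv v).differentiableAt : _)
  have hcont : Continuous g := hdiff.continuous
  have hdval : ∀ v : ℝ, deriv g v = (v - z) * (v ^ 2 + (z - x) * v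
      + (z ^ 2 - x * z + γ ^ 2 + 2 * μ)) / (μ * (γ ^ 2 + v ^ 2)) := fun v => (hderiv v).deriv
  -- the minimization property
  have gmin : ∀ u : ℝ, g z ≤ g u := by
    intro u
    rcases le_total z u with h | h
    · have mono : MonotoneOn g (Set.Icc z u) := by
        apply monotoneOn_of_deriv_nonneg (convex_Icc z u) hcont.continuousOn
          (fun v _ => (hdiff v).differentiableWithinAt)
        intro v hv
        rw [interior_Icc] at hv
        rw [hdval v]
        apply div_nonneg (mul_nonneg (by linarith [hv.1]) (hQ v)) (by positivity)
      exact mono (Set.left_mem_Icc.2 h) (Set.right_mem_Icc.2 h) h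
    · have anti : AntitoneOn g (Set.Icc u z) := by
        apply antitoneOn_of_deriv_nonpos (convex_Icc u z) hcont.continuousOn
          (fun v _ => (hdiff v).differentiableWithinAt)
        intro v hv
        rw [interior_Icc] at hv
        rw [hdval v]
        apply div_nonpos_of_nonpos_of_nonneg
          (mul_nonpos_of_nonpos_of_nonneg (by linarith [hv.2]) (hQ v)) (by positivity)
      exact anti (Set.left_mem_Icc.2 h) (Set.right_mem_Icc.2 h) h
  refine ⟨gmin, ?_⟩
  -- uniqueness
  intro w hw
  by_contra hne
  -- w is a global minimizer, so g w = g z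
  have hwz : g w = g z := le_antisymm (hw z) (gmin w)
  -- any point strictly between z and w is also a global minimizer, hence critical
  have hcrit : ∀ v : ℝ, v ≠ z → (∀ u : ℝ, g v ≤ g u) →
      v ^ 2 + (z - x) * v + (z ^ 2 - x * z + γ ^ 2 + 2 * μ) = 0 := by
    intro v hvz hvmin
    have hloc : IsLocalMin g v := Filter.Eventually.of_forall hvmin
    have h0 := hloc.hasDerivAt_eq_zero (hderiv v)
    rw [div_eq_zero_iff] at h0
    rcases h0 with h0 | h0
    · rcases mul_eq_zero.1 h0 with h0 | h0
      · exact absurd (sub_eq_zero.1 h0) hvz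
      · exact h0
    · exact absurd h0 (by positivity)
  rcases lt_or_gt_of_ne hne with hlt | hlt
  -- case w < z
  · have anti : AntitoneOn g (Set.Icc w z) := by
      apply antitoneOn_of_deriv_nonpos (convex_Icc w z) hcont.continuousOn
        (fun v _ => (hdiff v).differentiableWithinAt)
      intro v hv
      rw [interior_Icc] at hv
      rw [hdval v]
      apply div_nonpos_of_nonpos_of_nonneg
        (mul_nonpos_of_nonpos_of_nonneg (by linarith [hv.2]) (hQ v)) (by positivity)
    have hmid : ∀ v : ℝ, w < v → v < z →
        v ^ 2 + (z - x) * v + (z ^ 2 - x * z + γ ^ 2 + 2 * μ) = 0 := by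
      intro v h1 h2
      apply hcrit v (ne_of_lt h2)
      intro u
      have hv1 : g v ≤ g w := anti (Set.left_mem_Icc.2 (by linarith))
        ⟨le_of_lt h1, le_of_lt h2⟩ (le_of_lt h1)
      calc g v ≤ g w := hv1
        _ = g z := hwz
        _ ≤ g u := gmin u
    have q1 := hmid (w + (z - w) / 4) (by linarith) (by linarith)
    have q2 := hmid (w + (z - w) / 2) (by linarith) (by linarith)
    have q3 := hmid (w + 3 * (z - w) / 4) (by linarith) (by linarith)
    have : (z - w) ^ 2 / 8 = 0 := by linear_combination q1 - 2 * q2 + q3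
    nlinarith [sq_nonneg (z - w)]
  -- case z < w
  · have mono : MonotoneOn g (Set.Icc z w) := by
      apply monotoneOn_of_deriv_nonneg (convex_Icc z w) hcont.continuousOn
        (fun v _ => (hdiff v).differentiableWithinAt)
      intro v hv
      rw [interior_Icc] at hv
      rw [hdval v]
      apply div_nonneg (mul_nonneg (by linarith [hv.1]) (hQ v)) (by positivity)
    have hmid : ∀ v : ℝ, z < v → v < w →
        v ^ 2 + (z - x) * v + (z ^ 2 - x * z + γ ^ 2 + 2 * μ) = 0 := by
      intro v h1 h2
      apply hcrit v (ne_of_gt h1)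
      intro u
      have hv1 : g v ≤ g w := mono ⟨le_of_lt h1, le_of_lt h2⟩
        (Set.right_mem_Icc.2 (by linarith)) (le_of_lt h2)
      calc g v ≤ g w := hv1
        _ = g z := hwz
        _ ≤ g u := gmin u
    have q1 := hmid (z + (w - z) / 4) (by linarith) (by linarith)
    have q2 := hmid (z + (w - z) / 2) (by linarith) (by linarith)
    have q3 := hmid (z + 3 * (w - z) / 4) (by linarith) (by linarith)
    have : (w - z) ^ 2 / 8 = 0 := by linear_combination q1 - 2 * q2 + q3
    nlinarith [sq_nonneg (w - z)]
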